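/- For each multi-index n = (n_1,…,n_s) there exists a polynomial Q̃_n ∈ ℂ[X_1,…,X_s] of total degree exactly N_s = n_1 + ⋯ + n_s such that P̃_n(x|q) = Q̃_n(x_1,…,x_s) for all x ∈ [−1,1]^s; that is, the second-system multivariable Askey–Wilson polynomial P̃_n is a polynomial of total degree N_s in the variables x_1,…,x_s. -/

import Mathlib

open MeasureTheory Classical

noncomputable section

/-- Finite q-shifted factorial `(z;q)_n = ∏_{j=0}^{n-1} (1 - z q^j)`. -/
def qPoch (q z : ℂ) (n : ℕ) : ℂ := ∏ j ∈ Finset.range n, (1 - z * q ^ j)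

/-- Infinite q-shifted factorial `(z;q)_∞ = ∏_{j=0}^{∞} (1 - z q^j)`. -/
def qPochInf (q z : ℂ) : ℂ := ∏' j : ℕ, (1 - z * q ^ j)

/-- `e^{iθ}` where `θ = arccos x ∈ [0,π]`, so that `x = cos θ`. -/
def eAng (x : ℝ) : ℂ := Complex.exp (Complex.I * Real.arccos x)

/-- The Askey–Wilson polynomial `p_n(x; a,b,c,d | q)`
`= a^{-n} (ab,ac,ad;q)_n ∑_{k=0}^n (q^{-n},abcdq^{n-1},ae^{iθ},ae^{-iθ};q)_k q^k / (q,ab,ac,ad;q)_k`. -/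
def awp (q a b c d : ℂ) (n : ℕ) (x : ℝ) : ℂ :=
  a⁻¹ ^ n * (qPoch q (a * b) n * qPoch q (a * c) n * qPoch q (a * d) n) *
    ∑ k ∈ Finset.range (n + 1),
      qPoch q ((q ^ n)⁻¹) k * qPoch q (a * b * c * d * q ^ n * q⁻¹) k *
        qPoch q (a * eAng x) k * qPoch q (a * (eAng x)⁻¹) k * q ^ k /
      (qPoch q q k * qPoch q (a * b) k * qPoch q (a * c) k * qPoch q (a * d) k)

/-- Partial sum `N_{j,k} = n_j + ⋯ + n_k` (empty sum = 0). -/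
def psum (n : ℕ → ℕ) (j k : ℕ) : ℕ := ∑ i ∈ Finset.Icc j k, n i

/-- Partial product `A_{j,k} = a_j ⋯ a_k` (empty product = 1). -/
def pprod (ap : ℕ → ℂ) (j k : ℕ) : ℂ := ∏ i ∈ Finset.Icc j k, ap i

/-- One-based list of variables `x_1,…,x_s` obtained from a point `y ∈ ℝ^s`. -/
def lift (s : ℕ) (y : Fin s → ℝ) (k : ℕ) : ℝ := if h : k - 1 < s then y ⟨k - 1, h⟩ else 0

/-- The second system `P̃_n(x|q)` of multivariable Askey–Wilson polynomials, (2.10). -/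
def mvAW2 (q a b c d : ℂ) (ap : ℕ → ℂ) (s : ℕ) (n : ℕ → ℕ) (x : ℕ → ℝ) : ℂ :=
  awp q (c * pprod ap 2 s * q ^ psum n 2 s) (d * pprod ap 2 s * q ^ psum n 2 s) a b
      (n 1) (x 1) *
    ∏ k ∈ Finset.Icc 2 s,
      awp q (c * pprod ap (k + 1) s * q ^ psum n (k + 1) s)
        (d * pprod ap (k + 1) s * q ^ psum n (k + 1) s)
        (ap k * eAng (x (k - 1))) (ap k * (eAng (x (k - 1)))⁻¹) (n k) (x k)

/-! ### Auxiliary lemmas on `eAng` and `qPoch` -/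

lemma eAng_ne_zero (x : ℝ) : eAng x ≠ 0 := Complex.exp_ne_zero _

lemma eAng_mul_inv (x : ℝ) : eAng x * (eAng x)⁻¹ = 1 :=
  mul_inv_cancel₀ (eAng_ne_zero x)

lemma eAng_add_inv {x : ℝ} (hx : x ∈ Set.Icc (-1:ℝ) 1) : eAng x + (eAng x)⁻¹ = 2 * x := by
  have h1 : (eAng x)⁻¹ = Complex.exp (-(Complex.I * Real.arccos x)) := by
    rw [eAng, ← Complex.exp_neg]
  have h2 : eAng x + (eAng x)⁻¹ = 2 * Complex.cos (Real.arccos x) := by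
    rw [h1, eAng, Complex.cos, mul_comm Complex.I ((Real.arccos x : ℂ))]
    ring_nf
  rw [h2, ← Complex.ofReal_cos, Real.cos_arccos hx.1 hx.2]

lemma abs_eAng (x : ℝ) : ‖eAng x‖ = 1 := by
  rw [eAng, Complex.norm_exp]; simp

lemma abs_eAng_inv (x : ℝ) : ‖(eAng x)⁻¹‖ = 1 := by
  rw [norm_inv, abs_eAng]; norm_num

lemma pair_eval (q : ℝ) (α : ℂ) {x : ℝ} (hx : x ∈ Set.Icc (-1:ℝ) 1) (j : ℕ) :
    (1 - α * eAng x * (q:ℂ) ^ j) * (1 - α * (eAng x)⁻¹ * (q:ℂ) ^ j)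
      = (1 + α ^ 2 * (q:ℂ) ^ (2 * j)) - 2 * α * (q:ℂ) ^ j * x := by
  have h1 := eAng_mul_inv x
  have h2 := eAng_add_inv hx
  have h3 : (1 - α * eAng x * (q:ℂ) ^ j) * (1 - α * (eAng x)⁻¹ * (q:ℂ) ^ j)
      = 1 - α * (q:ℂ)^j * (eAng x + (eAng x)⁻¹)
        + α^2 * ((q:ℂ)^j)^2 * (eAng x * (eAng x)⁻¹) := by ring
  rw [h3, h1, h2, ← pow_mul]
  ring_nf

lemma qPoch_split (q z : ℂ) {j n : ℕ} (h : j ≤ n) :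
    qPoch q z n = qPoch q z j * ∏ m ∈ Finset.Ico j n, (1 - z * q ^ m) := by
  rw [qPoch, qPoch, Finset.prod_range_mul_prod_Ico _ h]

lemma qPoch_ne_zero {q : ℝ} (hq0 : 0 ≤ q) (hq1 : q ≤ 1) {z : ℂ}
    (hz : ‖z‖ < 1) (m : ℕ) : qPoch ↑q z m ≠ 0 := by
  rw [qPoch]
  refine Finset.prod_ne_zero_iff.mpr fun j _ h => ?_
  have h1 : z * (q:ℂ) ^ j = 1 := (sub_eq_zero.mp h).symm
  have h2 : ‖z * (q:ℂ) ^ j‖ = 1 := by rw [h1]; simp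
  have h3 : ‖z * (q:ℂ) ^ j‖ < 1 := by
    rw [norm_mul, norm_pow, Complex.norm_of_nonneg hq0]
    calc ‖z‖ * q ^ j ≤ ‖z‖ * 1 := by
          gcongr
          exact pow_le_one₀ hq0 hq1
      _ < 1 := by rw [mul_one]; exact hz
  linarith

lemma qPoch_qpow_inv_ne_zero {q : ℝ} (hq0 : 0 < q) (hq1 : q < 1) {nn j : ℕ}
    (hj : j ≤ nn) : qPoch ↑q (((q:ℂ) ^ nn)⁻¹) j ≠ 0 := by
  rw [qPoch]
  refine Finset.prod_ne_zero_iff.mpr fun m hm h => ?_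
  have hmlt : m < nn := lt_of_lt_of_le (Finset.mem_range.mp hm) hj
  have h1 : ((q:ℂ) ^ nn)⁻¹ * (q:ℂ) ^ m = ((q ^ m / q ^ nn : ℝ) : ℂ) := by
    push_cast; ring
  have h2 : (1 : ℝ) < q ^ m / q ^ nn := by
    rw [one_lt_div (by positivity)]
    exact pow_lt_pow_right_of_lt_one₀ hq0 hq1 hmlt
  rw [sub_eq_zero, h1] at h
  have h4 : (q ^ m / q ^ nn : ℝ) = 1 := by exact_mod_cast h.symm
  linarith

lemma qPoch_qfac_ne_zero {q : ℝ} (hq0 : 0 < q) (hq1 : q < 1) {z : ℂ}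
    (hz : ‖z‖ < 1) (nn : ℕ) :
    qPoch ↑q (z * (q:ℂ) ^ nn * ((q:ℂ))⁻¹) nn ≠ 0 := by
  cases nn with
  | zero => simp [qPoch]
  | succ m =>
      refine qPoch_ne_zero hq0.le hq1.le ?_ _
      have hq : (q:ℂ) ≠ 0 := by exact_mod_cast hq0.ne'
      have h1 : z * (q:ℂ) ^ (m+1) * ((q:ℂ))⁻¹ = z * (q:ℂ) ^ m := by
        field_simp; ring
      rw [h1, norm_mul, norm_pow, Complex.norm_of_nonneg hq0.le]
      calc ‖z‖ * q ^ m ≤ ‖z‖ * 1 := by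
            gcongr; exact pow_le_one₀ hq0.le hq1.le
        _ < 1 := by rw [mul_one]; exact hz

/-! ### Linear-factor polynomials and coefficient extraction -/

section LPsec
open MvPolynomial
set_option linter.unusedSectionVars false
variable {σ : Type*} [DecidableEq σ]

def LP (u v : ℕ → ℂ) (i : σ) (t : Finset ℕ) : MvPolynomial σ ℂ :=
  ∏ j ∈ t, (C (u j) + C (v j) * X i)

lemma eval_LP (u v : ℕ → ℂ) (i : σ) (t : Finset ℕ) (f : σ → ℂ) :
    eval f (LP u v i t) = ∏ j ∈ t, (u j + v j * f i) := by
  rw [LP, eval_prod]; simp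

lemma totalDegree_lin_le (a b : ℂ) (i : σ) :
    (C a + C b * X i : MvPolynomial σ ℂ).totalDegree ≤ 1 := by
  refine le_trans (totalDegree_add _ _) ?_
  refine max_le (by simp) (le_trans (totalDegree_mul _ _) ?_)
  simp [totalDegree_C, totalDegree_X]

lemma totalDegree_LP_le (u v : ℕ → ℂ) (i : σ) (t : Finset ℕ) :
    (LP u v i t).totalDegree ≤ t.card := by
  refine le_trans (totalDegree_finset_prod t _) ?_
  have h1 : ∑ j ∈ t, (C (u j) + C (v j) * X i).totalDegree ≤ ∑ _j ∈ t, 1 :=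
    Finset.sum_le_sum fun j _ => totalDegree_lin_le (u j) (v j) i
  simpa using h1

lemma vars_lin (a b : ℂ) (i : σ) :
    (C a + C b * X i : MvPolynomial σ ℂ).vars ⊆ {i} := by
  refine (vars_add_subset _ _).trans (Finset.union_subset ?_ ?_)
  · simp [vars_C]
  · refine (vars_mul _ _).trans (Finset.union_subset ?_ ?_) <;> simp [vars_C, vars_X]

lemma vars_LP (u v : ℕ → ℂ) (i : σ) (t : Finset ℕ) :
    (LP u v i t).vars ⊆ {i} := by
  rw [LP]
  induction t using Finset.cons_induction with
  | empty => simp [vars_C]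
  | cons j t hj ih =>
      rw [Finset.prod_cons]
      refine (vars_mul _ _).trans ?_
      exact Finset.union_subset (vars_lin _ _ _) ih

lemma coeff_single_eq_zero_of_totalDegree_lt {p : MvPolynomial σ ℂ} {i : σ} {m : ℕ}
    (h : p.totalDegree < m) : coeff (Finsupp.single i m) p = 0 := by
  refine coeff_eq_zero_of_totalDegree_lt ?_
  have hm : m ≠ 0 := by omega
  rw [Finsupp.support_single_ne_zero i hm]
  simpa using h

lemma coeff_LP_top (u v : ℕ → ℂ) (i : σ) (t : Finset ℕ) :
    coeff (Finsupp.single i t.card) (LP u v i t) = ∏ j ∈ t, v j := by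
  induction t using Finset.cons_induction with
  | empty => simp [LP]
  | cons a t ha ih =>
      rw [LP, Finset.prod_cons, ← LP, Finset.card_cons, Finset.prod_cons]
      rw [add_mul, mul_assoc]
      rw [coeff_add, coeff_C_mul, coeff_C_mul]
      have h0 : coeff (Finsupp.single i (t.card + 1)) (LP u v i t) = 0 :=
        coeff_single_eq_zero_of_totalDegree_lt
          (lt_of_le_of_lt (totalDegree_LP_le u v i t) (Nat.lt_succ_self _))
      rw [h0, mul_zero, zero_add]
      have hsingle : Finsupp.single i (t.card + 1)
          = Finsupp.single i 1 + Finsupp.single i t.card := by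
        rw [← Finsupp.single_add]; congr 1; omega
      rw [hsingle, coeff_X_mul, ih]

lemma weight_add (μ ν : σ →₀ ℕ) :
    ((μ + ν).sum fun _ e => e) = (μ.sum fun _ e => e) + (ν.sum fun _ e => e) :=
  Finsupp.sum_add_index' (fun _ => rfl) (fun _ _ _ => rfl)

lemma weight_single (i : σ) (m : ℕ) :
    ((Finsupp.single i m).sum fun _ e => e) = m :=
  Finsupp.sum_single_index rfl

lemma coeff_mul_step (P R : MvPolynomial σ ℂ) (i : σ) (nP : ℕ) (μR : σ →₀ ℕ) (dR : ℕ)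
    (hPd : P.totalDegree ≤ nP) (hRd : R.totalDegree ≤ dR)
    (hμR : (μR.sum fun _ e => e) = dR)
    (hvars : ∀ v ∈ P.vars, v = i ∨ (Finsupp.single i nP + μR) v = 0) :
    coeff (Finsupp.single i nP + μR) (P * R) =
      coeff (Finsupp.single i nP) P * coeff μR R := by
  rw [coeff_mul]
  refine Finset.sum_eq_single_of_mem (Finsupp.single i nP, μR) ?_ ?_
  · rw [Finset.HasAntidiagonal.mem_antidiagonal]
  · rintro ⟨ν1, ν2⟩ hmem hne
    rw [Finset.HasAntidiagonal.mem_antidiagonal] at hmem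
    by_contra hC
    have h1 : coeff ν1 P ≠ 0 := fun h => hC (by simp [h])
    have h2 : coeff ν2 R ≠ 0 := fun h => hC (by simp [h])
    have hν1supp : ν1 ∈ P.support := mem_support_iff.mpr h1
    have hz : ∀ v, v ≠ i → ν1 v = 0 := by
      intro v hv
      by_contra hv0
      have hvvars : v ∈ P.vars :=
        (mem_vars v).mpr ⟨ν1, hν1supp, Finsupp.mem_support_iff.mpr hv0⟩
      rcases hvars v hvvars with h | h
      · exact hv h
      · have hle : ν1 v + ν2 v = (Finsupp.single i nP + μR) v := by rw [← hmem]; simp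
        omega
    have hν1single : ν1 = Finsupp.single i (ν1 i) := by
      ext v
      rcases eq_or_ne v i with rfl | hv
      · simp
      · rw [hz v hv, Finsupp.single_apply, if_neg (Ne.symm hv)]
    have d1 : (ν1.sum fun _ e => e) ≤ nP := le_trans (le_totalDegree hν1supp) hPd
    have d2 : (ν2.sum fun _ e => e) ≤ dR :=
      le_trans (le_totalDegree (mem_support_iff.mpr h2)) hRd
    have dsum : (ν1.sum fun _ e => e) + (ν2.sum fun _ e => e) = nP + dR := by
      rw [← weight_add, hmem, weight_add, weight_single, hμR]
    have hsum1 : (ν1.sum fun _ e => e) = ν1 i := by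
      conv_lhs => rw [hν1single]
      exact weight_single i (ν1 i)
    have hν1eq : ν1 = Finsupp.single i nP := by
      rw [hν1single]; congr 1; omega
    have hν2eq : ν2 = μR := by
      rw [hν1eq] at hmem
      exact add_left_cancel hmem
    exact hne (Prod.ext hν1eq hν2eq)

lemma coeff_mul_left_const (P R : MvPolynomial σ ℂ) (i : σ) (μ : σ →₀ ℕ)
    (hvars : P.vars ⊆ {i}) (hμ : μ i = 0) :
    coeff μ (P * R) = coeff 0 P * coeff μ R := by
  rw [coeff_mul]
  refine Finset.sum_eq_single_of_mem (0, μ) ?_ ?_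
  · rw [Finset.HasAntidiagonal.mem_antidiagonal]; simp
  · rintro ⟨ν1, ν2⟩ hmem hne
    rw [Finset.HasAntidiagonal.mem_antidiagonal] at hmem
    by_contra hC
    have h1 : coeff ν1 P ≠ 0 := fun h => hC (by simp [h])
    have hν1supp : ν1 ∈ P.support := mem_support_iff.mpr h1
    have hz : ν1 = 0 := by
      ext v
      by_contra hv0
      have hvvars : v ∈ P.vars :=
        (mem_vars v).mpr ⟨ν1, hν1supp, Finsupp.mem_support_iff.mpr (by simpa using hv0)⟩
      have hvi : v = i := by simpa using hvars hvvars
      subst hvi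
      have hle : ν1 v + ν2 v = μ v := by rw [← hmem]; simp
      simp only [Finsupp.coe_zero, Pi.zero_apply] at hv0
      omega
    have hν2 : ν2 = μ := by rw [hz, zero_add] at hmem; exact hmem
    exact hne (Prod.ext hz hν2)

end LPsec

/-! ### The basic quadratic factors and the Askey–Wilson factors as polynomials -/

section GPsec
open MvPolynomial
set_option linter.unusedSectionVars false
variable {σ : Type*} [DecidableEq σ]

def GP (q α : ℂ) (i : σ) (t : Finset ℕ) : MvPolynomial σ ℂ :=
  LP (fun j => 1 + α ^ 2 * q ^ (2 * j)) (fun j => -(2 * α * q ^ j)) i t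

lemma eval_GP_pair (q : ℝ) (α : ℂ) (i : σ) (t : Finset ℕ) (f : σ → ℂ) {x : ℝ}
    (hx : x ∈ Set.Icc (-1:ℝ) 1) (hfi : f i = ↑x) :
    eval f (GP ↑q α i t)
      = ∏ j ∈ t, ((1 - α * eAng x * (q:ℂ) ^ j) * (1 - α * (eAng x)⁻¹ * (q:ℂ) ^ j)) := by
  rw [GP, eval_LP]
  refine Finset.prod_congr rfl fun j _ => ?_
  rw [pair_eval q α hx j, hfi]
  ring

lemma eval_GP_range (q : ℝ) (α : ℂ) (i : σ) (jn : ℕ) (f : σ → ℂ) {x : ℝ}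
    (hx : x ∈ Set.Icc (-1:ℝ) 1) (hfi : f i = ↑x) :
    eval f (GP ↑q α i (Finset.range jn))
      = qPoch ↑q (α * eAng x) jn * qPoch ↑q (α * (eAng x)⁻¹) jn := by
  rw [eval_GP_pair q α i _ f hx hfi, Finset.prod_mul_distrib, qPoch, qPoch]

lemma totalDegree_GP_le (q α : ℂ) (i : σ) (t : Finset ℕ) :
    (GP q α i t).totalDegree ≤ t.card := totalDegree_LP_le _ _ _ _

lemma vars_GP (q α : ℂ) (i : σ) (t : Finset ℕ) : (GP q α i t).vars ⊆ {i} :=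
  vars_LP _ _ _ _

lemma coeff_GP_top (q α : ℂ) (i : σ) (t : Finset ℕ) :
    coeff (Finsupp.single i t.card) (GP q α i t) = ∏ j ∈ t, -(2 * α * q ^ j) :=
  coeff_LP_top _ _ _ _

/-- The first Askey–Wilson factor, as a polynomial in one variable `X i`. -/
def fac1 (q A B a b : ℂ) (nn : ℕ) (i : σ) : MvPolynomial σ ℂ :=
  C (A⁻¹ ^ nn * (qPoch q (A * B) nn * qPoch q (A * a) nn * qPoch q (A * b) nn)) *
    ∑ j ∈ Finset.range (nn + 1),
      C (qPoch q ((q ^ nn)⁻¹) j * qPoch q (A * B * a * b * q ^ nn * q⁻¹) j * q ^ j /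
          (qPoch q q j * qPoch q (A * B) j * qPoch q (A * a) j * qPoch q (A * b) j)) *
        GP q A i (Finset.range j)

/-- The later Askey–Wilson factors, as polynomials in `X ip` and `X ic`. -/
def fack (q A B α : ℂ) (nn : ℕ) (ip ic : σ) : MvPolynomial σ ℂ :=
  C (A⁻¹ ^ nn * qPoch q (A * B) nn) *
    ∑ j ∈ Finset.range (nn + 1),
      C (qPoch q ((q ^ nn)⁻¹) j * qPoch q (A * B * α ^ 2 * q ^ nn * q⁻¹) j * q ^ j /
          (qPoch q q j * qPoch q (A * B) j)) *
        (GP q (A * α) ip (Finset.Ico j nn) * GP q A ic (Finset.range j))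

lemma eval_fac1 (q : ℝ) (A B a b : ℂ) (nn : ℕ) (i : σ) (f : σ → ℂ) {x : ℝ}
    (hx : x ∈ Set.Icc (-1:ℝ) 1) (hfi : f i = ↑x) :
    eval f (fac1 ↑q A B a b nn i) = awp ↑q A B a b nn x := by
  rw [fac1, awp, eval_mul, eval_C, map_sum]
  congr 1
  refine Finset.sum_congr rfl fun j hj => ?_
  rw [eval_mul, eval_C, eval_GP_range q A i j f hx hfi]
  ring

set_option maxHeartbeats 2000000 in
lemma eval_fack (q : ℝ) (hq0 : 0 < q) (hq1 : q < 1) (A B α : ℂ) (hA0 : A ≠ 0)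
    (hAα : ‖A * α‖ < 1) (hAB : ‖A * B‖ < 1)
    (nn : ℕ) (ip ic : σ) (f : σ → ℂ) {xp xc : ℝ}
    (hxp : xp ∈ Set.Icc (-1:ℝ) 1) (hxc : xc ∈ Set.Icc (-1:ℝ) 1)
    (hfp : f ip = ↑xp) (hfc : f ic = ↑xc) :
    eval f (fack ↑q A B α nn ip ic)
      = awp ↑q A B (α * eAng xp) (α * (eAng xp)⁻¹) nn xc := by
  rw [fack, awp, eval_mul, eval_C, map_sum, Finset.mul_sum, Finset.mul_sum]
  refine Finset.sum_congr rfl fun j hj => ?_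
  have hj' : j ≤ nn := Nat.lt_succ_iff.mp (Finset.mem_range.mp hj)
  rw [eval_mul, eval_C, eval_mul, eval_GP_range q A ic j f hxc hfc,
    eval_GP_pair q (A * α) ip (Finset.Ico j nn) f hxp hfp]
  -- absolute-value facts for the denominators
  have habs1 : ‖A * (α * eAng xp)‖ < 1 := by
    rw [show A * (α * eAng xp) = A * α * eAng xp by ring, norm_mul, abs_eAng, mul_one]
    exact hAα
  have habs2 : ‖A * (α * (eAng xp)⁻¹)‖ < 1 := by
    rw [show A * (α * (eAng xp)⁻¹) = A * α * (eAng xp)⁻¹ by ring, norm_mul, abs_eAng_inv,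
      mul_one]
    exact hAα
  have hP : qPoch ↑q (A * (α * eAng xp)) j ≠ 0 := qPoch_ne_zero hq0.le hq1.le habs1 j
  have hQ : qPoch ↑q (A * (α * (eAng xp)⁻¹)) j ≠ 0 := qPoch_ne_zero hq0.le hq1.le habs2 j
  have hqq : qPoch ↑q ↑q j ≠ 0 := by
    refine qPoch_ne_zero hq0.le hq1.le ?_ j
    rw [Complex.norm_of_nonneg hq0.le]; exact hq1
  have hABj : qPoch ↑q (A * B) j ≠ 0 := qPoch_ne_zero hq0.le hq1.le hAB j
  have hXs := qPoch_split (↑q) (A * (α * eAng xp)) hj'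
  have hYs := qPoch_split (↑q) (A * (α * (eAng xp)⁻¹)) hj'
  have harg : A * B * (α * eAng xp) * (α * (eAng xp)⁻¹) * (↑q) ^ nn * (↑q : ℂ)⁻¹
      = A * B * α ^ 2 * (↑q) ^ nn * (↑q : ℂ)⁻¹ := by
    have h := eAng_mul_inv xp
    calc A * B * (α * eAng xp) * (α * (eAng xp)⁻¹) * (↑q) ^ nn * (↑q : ℂ)⁻¹
        = A * B * α ^ 2 * (eAng xp * (eAng xp)⁻¹) * (↑q) ^ nn * (↑q : ℂ)⁻¹ := by ring
      _ = A * B * α ^ 2 * (↑q) ^ nn * (↑q : ℂ)⁻¹ := by rw [h]; ring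
  have hprod : ∏ m ∈ Finset.Ico j nn,
        ((1 - A * α * eAng xp * (q:ℂ) ^ m) * (1 - A * α * (eAng xp)⁻¹ * (q:ℂ) ^ m))
      = (∏ m ∈ Finset.Ico j nn, (1 - A * (α * eAng xp) * (q:ℂ) ^ m))
        * ∏ m ∈ Finset.Ico j nn, (1 - A * (α * (eAng xp)⁻¹) * (q:ℂ) ^ m) := by
    rw [← Finset.prod_mul_distrib]
    exact Finset.prod_congr rfl fun m _ => by ring
  rw [harg, hprod, hXs, hYs]
  set P1 := qPoch ↑q (A * (α * eAng xp)) j with hP1def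
  set Q1 := qPoch ↑q (A * (α * (eAng xp)⁻¹)) j with hQ1def
  field_simp [hP, hQ, hqq, hABj, hA0]

lemma totalDegree_fac1_le (q A B a b : ℂ) (nn : ℕ) (i : σ) :
    (fac1 q A B a b nn i).totalDegree ≤ nn := by
  rw [fac1]
  refine (totalDegree_mul _ _).trans ?_
  rw [totalDegree_C, zero_add]
  refine (totalDegree_finset_sum _ _).trans (Finset.sup_le fun j hj => ?_)
  refine (totalDegree_mul _ _).trans ?_
  rw [totalDegree_C, zero_add]
  refine (totalDegree_GP_le _ _ _ _).trans ?_
  rw [Finset.card_range]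
  exact Nat.lt_succ_iff.mp (Finset.mem_range.mp hj)

lemma totalDegree_fack_le (q A B α : ℂ) (nn : ℕ) (ip ic : σ) :
    (fack q A B α nn ip ic).totalDegree ≤ nn := by
  rw [fack]
  refine (totalDegree_mul _ _).trans ?_
  rw [totalDegree_C, zero_add]
  refine (totalDegree_finset_sum _ _).trans (Finset.sup_le fun j hj => ?_)
  have hj' : j ≤ nn := Nat.lt_succ_iff.mp (Finset.mem_range.mp hj)
  refine (totalDegree_mul _ _).trans ?_
  rw [totalDegree_C, zero_add]
  refine (totalDegree_mul _ _).trans ?_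
  have h1 := (totalDegree_GP_le q (A*α) ip (Finset.Ico j nn)).trans
    (le_of_eq (Nat.card_Ico j nn))
  have h2 := (totalDegree_GP_le q A ic (Finset.range j)).trans
    (le_of_eq (Finset.card_range j))
  omega

lemma vars_fac1 (q A B a b : ℂ) (nn : ℕ) (i : σ) :
    (fac1 q A B a b nn i).vars ⊆ {i} := by
  rw [fac1]
  refine (vars_mul _ _).trans (Finset.union_subset (by rw [vars_C]; exact Finset.empty_subset _) ?_)
  refine (vars_sum_subset _ _).trans (Finset.biUnion_subset.mpr fun j _ => ?_)
  refine (vars_mul _ _).trans (Finset.union_subset (by rw [vars_C]; exact Finset.empty_subset _) ?_)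
  exact vars_GP _ _ _ _

lemma vars_fack (q A B α : ℂ) (nn : ℕ) (ip ic : σ) :
    (fack q A B α nn ip ic).vars ⊆ {ip, ic} := by
  rw [fack]
  refine (vars_mul _ _).trans (Finset.union_subset (by rw [vars_C]; exact Finset.empty_subset _) ?_)
  refine (vars_sum_subset _ _).trans (Finset.biUnion_subset.mpr fun j _ => ?_)
  refine (vars_mul _ _).trans (Finset.union_subset (by rw [vars_C]; exact Finset.empty_subset _) ?_)
  refine (vars_mul _ _).trans (Finset.union_subset ?_ ?_)
  · exact (vars_GP _ _ _ _).trans (by intro v hv; simp at hv; simp [hv])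
  · exact (vars_GP _ _ _ _).trans (by intro v hv; simp at hv; simp [hv])

lemma coeff_fac1_top (q A B a b : ℂ) (nn : ℕ) (i : σ) :
    coeff (Finsupp.single i nn) (fac1 q A B a b nn i)
      = A⁻¹ ^ nn * (qPoch q (A * B) nn * qPoch q (A * a) nn * qPoch q (A * b) nn) *
        (qPoch q ((q ^ nn)⁻¹) nn * qPoch q (A * B * a * b * q ^ nn * q⁻¹) nn * q ^ nn /
          (qPoch q q nn * qPoch q (A * B) nn * qPoch q (A * a) nn * qPoch q (A * b) nn)) *
        ∏ m ∈ Finset.range nn, -(2 * A * q ^ m) := by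
  rw [fac1, coeff_C_mul, coeff_sum]
  rw [Finset.sum_eq_single_of_mem nn (by simp) ?_]
  · rw [coeff_C_mul]
    have : coeff (Finsupp.single i nn) (GP q A i (Finset.range nn))
        = ∏ m ∈ Finset.range nn, -(2 * A * q ^ m) := by
      have hc := coeff_GP_top q A i (Finset.range nn)
      rwa [Finset.card_range] at hc
    rw [this]; ring
  · intro j hj hjne
    have hj' : j < nn := by
      have := Nat.lt_succ_iff.mp (Finset.mem_range.mp hj); omega
    rw [coeff_C_mul]
    have h0 : coeff (Finsupp.single i nn) (GP q A i (Finset.range j)) = 0 :=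
      coeff_single_eq_zero_of_totalDegree_lt
        (lt_of_le_of_lt ((totalDegree_GP_le _ _ _ _).trans (le_of_eq (Finset.card_range j))) hj')
    rw [h0, mul_zero]

lemma coeff_fack_top (q A B α : ℂ) (nn : ℕ) (ip ic : σ) (hne : ip ≠ ic) :
    coeff (Finsupp.single ic nn) (fack q A B α nn ip ic)
      = A⁻¹ ^ nn * qPoch q (A * B) nn *
        (qPoch q ((q ^ nn)⁻¹) nn * qPoch q (A * B * α ^ 2 * q ^ nn * q⁻¹) nn * q ^ nn /
          (qPoch q q nn * qPoch q (A * B) nn)) *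
        ∏ m ∈ Finset.range nn, -(2 * A * q ^ m) := by
  rw [fack, coeff_C_mul, coeff_sum]
  have hμip : (Finsupp.single ic nn) ip = 0 := by
    rw [Finsupp.single_apply, if_neg hne.symm]
  rw [Finset.sum_eq_single_of_mem nn (by simp) ?_]
  · rw [coeff_C_mul,
      coeff_mul_left_const (GP q (A*α) ip (Finset.Ico nn nn)) _ ip _ (vars_GP _ _ _ _) hμip]
    have h1 : GP q (A*α) ip (Finset.Ico nn nn) = 1 := by
      rw [Finset.Ico_self, GP, LP, Finset.prod_empty]
    have h2 : coeff (Finsupp.single ic nn) (GP q A ic (Finset.range nn))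
        = ∏ m ∈ Finset.range nn, -(2 * A * q ^ m) := by
      have hc := coeff_GP_top q A ic (Finset.range nn)
      rwa [Finset.card_range] at hc
    rw [h1, h2]
    simp only [coeff_zero_one]
    ring
  · intro j hj hjne
    have hj' : j < nn := by
      have := Nat.lt_succ_iff.mp (Finset.mem_range.mp hj); omega
    rw [coeff_C_mul,
      coeff_mul_left_const (GP q (A*α) ip (Finset.Ico j nn)) _ ip _ (vars_GP _ _ _ _) hμip]
    have h0 : coeff (Finsupp.single ic nn) (GP q A ic (Finset.range j)) = 0 :=
      coeff_single_eq_zero_of_totalDegree_lt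
        (lt_of_le_of_lt ((totalDegree_GP_le _ _ _ _).trans (le_of_eq (Finset.card_range j))) hj')
    rw [h0, mul_zero, mul_zero]

end GPsec

/-! ### Nonvanishing of leading coefficients -/

section TopNe
open MvPolynomial
set_option linter.unusedSectionVars false
variable {σ : Type*} [DecidableEq σ]

lemma abs_mul_lt_one {u v : ℂ} (hu : ‖u‖ < 1) (hv : ‖v‖ < 1) :
    ‖u * v‖ < 1 := by
  rw [norm_mul]
  nlinarith [norm_nonneg u, norm_nonneg v]

lemma fac1_top_ne_zero (q : ℝ) (hq0 : 0 < q) (hq1 : q < 1) (A B a b : ℂ) (hA0 : A ≠ 0)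
    (hA : ‖A‖ < 1) (hB : ‖B‖ < 1)
    (ha : ‖a‖ < 1) (hb : ‖b‖ < 1) (nn : ℕ) (i : σ) :
    coeff (Finsupp.single i nn) (fac1 (↑q) A B a b nn i) ≠ 0 := by
  have hq0' : (q:ℂ) ≠ 0 := by exact_mod_cast hq0.ne'
  have hAB := abs_mul_lt_one hA hB
  have hAa := abs_mul_lt_one hA ha
  have hAb := abs_mul_lt_one hA hb
  have hABab := abs_mul_lt_one (abs_mul_lt_one hAB ha) hb
  rw [coeff_fac1_top]
  refine mul_ne_zero (mul_ne_zero (mul_ne_zero ?_ ?_) ?_) ?_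
  · exact pow_ne_zero _ (inv_ne_zero hA0)
  · exact mul_ne_zero (mul_ne_zero (qPoch_ne_zero hq0.le hq1.le hAB nn)
      (qPoch_ne_zero hq0.le hq1.le hAa nn)) (qPoch_ne_zero hq0.le hq1.le hAb nn)
  · refine div_ne_zero ?_ ?_
    · exact mul_ne_zero (mul_ne_zero (qPoch_qpow_inv_ne_zero hq0 hq1 (le_refl nn))
        (qPoch_qfac_ne_zero hq0 hq1 hABab nn)) (pow_ne_zero _ hq0')
    · exact mul_ne_zero (mul_ne_zero (mul_ne_zero
        (qPoch_ne_zero hq0.le hq1.le (by rw [Complex.norm_of_nonneg hq0.le]; exact hq1) nn)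
        (qPoch_ne_zero hq0.le hq1.le hAB nn)) (qPoch_ne_zero hq0.le hq1.le hAa nn))
        (qPoch_ne_zero hq0.le hq1.le hAb nn)
  · refine Finset.prod_ne_zero_iff.mpr fun m _ => ?_
    exact neg_ne_zero.mpr (mul_ne_zero (mul_ne_zero two_ne_zero hA0) (pow_ne_zero _ hq0'))

lemma fack_top_ne_zero (q : ℝ) (hq0 : 0 < q) (hq1 : q < 1) (A B α : ℂ) (hA0 : A ≠ 0)
    (hA : ‖A‖ < 1) (hB : ‖B‖ < 1) (hα : ‖α‖ < 1)
    (nn : ℕ) (ip ic : σ) (hne : ip ≠ ic) :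
    coeff (Finsupp.single ic nn) (fack (↑q) A B α nn ip ic) ≠ 0 := by
  have hq0' : (q:ℂ) ≠ 0 := by exact_mod_cast hq0.ne'
  have hAB := abs_mul_lt_one hA hB
  have hα2 : ‖α ^ 2‖ < 1 := by rw [sq]; exact abs_mul_lt_one hα hα
  have hABα := abs_mul_lt_one hAB hα2
  rw [coeff_fack_top _ _ _ _ _ _ _ hne]
  refine mul_ne_zero (mul_ne_zero (mul_ne_zero ?_ ?_) ?_) ?_
  · exact pow_ne_zero _ (inv_ne_zero hA0)
  · exact qPoch_ne_zero hq0.le hq1.le hAB nn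
  · refine div_ne_zero ?_ ?_
    · exact mul_ne_zero (mul_ne_zero (qPoch_qpow_inv_ne_zero hq0 hq1 (le_refl nn))
        (qPoch_qfac_ne_zero hq0 hq1 hABα nn)) (pow_ne_zero _ hq0')
    · exact mul_ne_zero
        (qPoch_ne_zero hq0.le hq1.le (by rw [Complex.norm_of_nonneg hq0.le]; exact hq1) nn)
        (qPoch_ne_zero hq0.le hq1.le hAB nn)
  · refine Finset.prod_ne_zero_iff.mpr fun m _ => ?_
    exact neg_ne_zero.mpr (mul_ne_zero (mul_ne_zero two_ne_zero hA0) (pow_ne_zero _ hq0'))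

end TopNe

/-! ### Indexing and the multivariable assembly -/

section Assembly
open MvPolynomial

def idxf (s : ℕ) (hs : 0 < s) (k : ℕ) : Fin s := ⟨min (k - 1) (s - 1), by omega⟩

lemma idxf_val {s : ℕ} (hs : 0 < s) {k : ℕ} (h1 : 1 ≤ k) (h2 : k ≤ s) :
    ((idxf s hs k : Fin s) : ℕ) = k - 1 := by
  simp only [idxf]
  omega

lemma idxf_inj {s : ℕ} (hs : 0 < s) {j k : ℕ} (hj1 : 1 ≤ j) (hjs : j ≤ s)
    (hk1 : 1 ≤ k) (hks : k ≤ s) (h : idxf s hs j = idxf s hs k) : j = k := by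
  have h2 := congrArg (Fin.val) h
  rw [idxf_val hs hj1 hjs, idxf_val hs hk1 hks] at h2
  omega

def Ff (q : ℝ) (a b c d : ℂ) (ap : ℕ → ℂ) (s : ℕ) (hs : 0 < s) (n : ℕ → ℕ) (k : ℕ) :
    MvPolynomial (Fin s) ℂ :=
  if k = 1 then
    fac1 (↑q) (c * pprod ap 2 s * (q:ℂ) ^ psum n 2 s)
      (d * pprod ap 2 s * (q:ℂ) ^ psum n 2 s) a b (n 1) (idxf s hs 1)
  else
    fack (↑q) (c * pprod ap (k + 1) s * (q:ℂ) ^ psum n (k + 1) s)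
      (d * pprod ap (k + 1) s * (q:ℂ) ^ psum n (k + 1) s) (ap k) (n k)
      (idxf s hs (k - 1)) (idxf s hs k)

def μtf (s : ℕ) (hs : 0 < s) (n : ℕ → ℕ) (k : ℕ) : Fin s →₀ ℕ :=
  ∑ j ∈ Finset.Icc k s, Finsupp.single (idxf s hs j) (n j)

lemma μtf_apply_eq_zero (s : ℕ) (hs : 0 < s) (n : ℕ → ℕ) (k t : ℕ)
    (ht1 : 1 ≤ t) (hts : t ≤ s) (htk : t < k) : μtf s hs n k (idxf s hs t) = 0 := by
  rw [μtf, Finsupp.finset_sum_apply]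
  refine Finset.sum_eq_zero fun j hj => ?_
  obtain ⟨hjk, hjs⟩ := Finset.mem_Icc.mp hj
  rw [Finsupp.single_apply, if_neg]
  intro h
  have := idxf_inj hs (by omega) hjs ht1 hts h
  omega

lemma μtf_sum (s : ℕ) (hs : 0 < s) (n : ℕ → ℕ) (k : ℕ) :
    ((μtf s hs n k).sum fun _ e => e) = ∑ j ∈ Finset.Icc k s, n j := by
  rw [μtf, Finsupp.sum_fintype _ _ (fun _ => rfl)]
  have h1 : ∀ v : Fin s,
      (∑ j ∈ Finset.Icc k s, Finsupp.single (idxf s hs j) (n j)) v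
        = ∑ j ∈ Finset.Icc k s, (Finsupp.single (idxf s hs j) (n j)) v :=
    fun v => Finsupp.finset_sum_apply _ _ v
  simp_rw [h1]
  rw [Finset.sum_comm]
  refine Finset.sum_congr rfl fun j _ => ?_
  simp [Finsupp.single_apply]

lemma tail_lemma (q : ℝ) (hq0 : 0 < q) (hq1 : q < 1) (a b c d : ℂ) (ap : ℕ → ℂ) (s : ℕ)
    (hs : 0 < s) (n : ℕ → ℕ)
    (hA0 : ∀ k : ℕ, 1 ≤ k → (c * pprod ap (k + 1) s * (q:ℂ) ^ psum n (k + 1) s) ≠ 0)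
    (habsA : ∀ k : ℕ, 1 ≤ k → ‖c * pprod ap (k + 1) s * (q:ℂ) ^ psum n (k + 1) s‖ < 1)
    (habsB : ∀ k : ℕ, 1 ≤ k → ‖d * pprod ap (k + 1) s * (q:ℂ) ^ psum n (k + 1) s‖ < 1)
    (hap1 : ∀ k, 2 ≤ k → k ≤ s → ‖ap k‖ < 1) :
    ∀ m k : ℕ, 2 ≤ k → k + m = s + 1 →
      (∏ j ∈ Finset.Icc k s, Ff q a b c d ap s hs n j).totalDegree
          ≤ ∑ j ∈ Finset.Icc k s, n j ∧
      MvPolynomial.coeff (μtf s hs n k) (∏ j ∈ Finset.Icc k s, Ff q a b c d ap s hs n j) ≠ 0 := by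
  intro m
  induction m with
  | zero =>
      intro k hk2 hk
      have hk' : k = s + 1 := by omega
      subst hk'
      have he : Finset.Icc (s + 1) s = ∅ := Finset.Icc_eq_empty (by omega)
      rw [he]
      simp [μtf, he]
  | succ m ih =>
      intro k hk2 hk
      have hks : k ≤ s := by omega
      obtain ⟨hd, hc⟩ := ih (k + 1) (by omega) (by omega)
      have hins : Finset.Icc k s = insert k (Finset.Icc (k + 1) s) := by
        ext t; simp only [Finset.mem_Icc, Finset.mem_insert]; omega
      have hnotmem : k ∉ Finset.Icc (k + 1) s := by simp
      have hFk : Ff q a b c d ap s hs n k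
          = fack (↑q) (c * pprod ap (k + 1) s * (q:ℂ) ^ psum n (k + 1) s)
              (d * pprod ap (k + 1) s * (q:ℂ) ^ psum n (k + 1) s) (ap k) (n k)
              (idxf s hs (k - 1)) (idxf s hs k) := by
        rw [Ff, if_neg (by omega)]
      have hFkdeg : (Ff q a b c d ap s hs n k).totalDegree ≤ n k := by
        rw [hFk]; exact totalDegree_fack_le _ _ _ _ _ _ _
      have hne : idxf s hs (k - 1) ≠ idxf s hs k := by
        intro h
        have := idxf_inj hs (by omega) (by omega) (by omega) hks h
        omega
      constructor
      · rw [hins, Finset.prod_insert hnotmem, Finset.sum_insert hnotmem]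
        exact (totalDegree_mul _ _).trans (add_le_add hFkdeg hd)
      · rw [hins, Finset.prod_insert hnotmem]
        have hμ : μtf s hs n k = Finsupp.single (idxf s hs k) (n k) + μtf s hs n (k + 1) := by
          rw [μtf, μtf, hins, Finset.sum_insert hnotmem]
        rw [hμ]
        rw [coeff_mul_step _ _ (idxf s hs k) (n k) (μtf s hs n (k + 1))
          (∑ j ∈ Finset.Icc (k + 1) s, n j) hFkdeg hd (μtf_sum s hs n (k + 1)) ?_]
        · refine mul_ne_zero ?_ hc
          rw [hFk]
          refine fack_top_ne_zero q hq0 hq1 _ _ _ (hA0 k (by omega)) (habsA k (by omega))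
            (habsB k (by omega)) (hap1 k hk2 hks) (n k) _ _ hne
        · -- vars condition
          intro v hv
          have hsub : (Ff q a b c d ap s hs n k).vars ⊆ {idxf s hs (k - 1), idxf s hs k} := by
            rw [hFk]; exact vars_fack _ _ _ _ _ _ _
          have hv2 := hsub hv
          rw [Finset.mem_insert, Finset.mem_singleton] at hv2
          rcases hv2 with h | h
          · right
            subst h
            rw [Finsupp.add_apply]
            have h1 : (Finsupp.single (idxf s hs k) (n k)) (idxf s hs (k - 1)) = 0 := by
              rw [Finsupp.single_apply, if_neg (fun hh => hne hh.symm)]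
            have h2 : μtf s hs n (k + 1) (idxf s hs (k - 1)) = 0 :=
              μtf_apply_eq_zero s hs n (k + 1) (k - 1) (by omega) (by omega) (by omega)
            rw [h1, h2]
          · left; exact h

end Assembly

open MvPolynomial in
/-- `P̃_n(x|q)` is a polynomial of total degree exactly `N_s = n_1 + ⋯ + n_s`
in the variables `x_1, …, x_s`. -/
theorem mvAskeyWilson_second_isPolynomial_of_totalDegree (q : ℝ) (hq0 : 0 < q) (hq1 : q < 1)
    (s : ℕ) (hs : 1 ≤ s) (a b c d : ℂ) (ap : ℕ → ℂ)
    (ha0 : a ≠ 0) (hb0 : b ≠ 0) (hc0 : c ≠ 0) (hd0 : d ≠ 0)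
    (hap0 : ∀ k, 2 ≤ k → k ≤ s → ap k ≠ 0)
    (ha1 : ‖a‖ < 1) (hb1 : ‖b‖ < 1)
    (hc1 : ‖c‖ < 1) (hd1 : ‖d‖ < 1)
    (hap1 : ∀ k, 2 ≤ k → k ≤ s → ‖ap k‖ < 1)
    (n : ℕ → ℕ) :
    ∃ Q : MvPolynomial (Fin s) ℂ,
      Q.totalDegree = psum n 1 s ∧
        ∀ x : ℕ → ℝ, (∀ k ∈ Finset.Icc 1 s, x k ∈ Set.Icc (-1 : ℝ) 1) →
          mvAW2 q a b c d ap s n x =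
            MvPolynomial.eval (fun i : Fin s => ((x ((i : ℕ) + 1) : ℝ) : ℂ)) Q := by
  have hs0 : 0 < s := hs
  have hq0' : (q:ℂ) ≠ 0 := by exact_mod_cast hq0.ne'
  have habsq : ∀ m : ℕ, ‖(q:ℂ) ^ m‖ ≤ 1 := by
    intro m
    rw [norm_pow, Complex.norm_of_nonneg hq0.le]
    exact pow_le_one₀ hq0.le hq1.le
  have habsp : ∀ k, 2 ≤ k → ‖pprod ap k s‖ ≤ 1 := by
    intro k hk
    rw [pprod, norm_prod]
    refine Finset.prod_le_one (fun i _ => norm_nonneg _) (fun i hi => ?_)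
    obtain ⟨h1, h2⟩ := Finset.mem_Icc.mp hi
    exact (hap1 i (le_trans hk h1) h2).le
  have hpne : ∀ k, 2 ≤ k → pprod ap k s ≠ 0 := by
    intro k hk
    rw [pprod]
    refine Finset.prod_ne_zero_iff.mpr fun i hi => ?_
    obtain ⟨h1, h2⟩ := Finset.mem_Icc.mp hi
    exact hap0 i (le_trans hk h1) h2
  have hA0 : ∀ k : ℕ, 1 ≤ k → (c * pprod ap (k + 1) s * (q:ℂ) ^ psum n (k + 1) s) ≠ 0 :=
    fun k hk => mul_ne_zero (mul_ne_zero hc0 (hpne (k + 1) (by omega))) (pow_ne_zero _ hq0')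
  have habsA : ∀ k : ℕ, 1 ≤ k → ∀ e : ℂ, ‖e‖ < 1 →
      ‖e * pprod ap (k + 1) s * (q:ℂ) ^ psum n (k + 1) s‖ < 1 := by
    intro k hk e he
    have h1 : ‖pprod ap (k + 1) s‖ ≤ 1 := habsp _ (by omega)
    have h2 : ‖(q:ℂ) ^ psum n (k + 1) s‖ ≤ 1 := habsq _
    have h3 := norm_nonneg (pprod ap (k + 1) s)
    have h4 := norm_nonneg ((q:ℂ) ^ psum n (k + 1) s)
    have h5 := norm_nonneg e
    rw [norm_mul, norm_mul]
    have h6 : ‖e‖ * ‖pprod ap (k + 1) s‖ ≤ ‖e‖ :=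
      mul_le_of_le_one_right h5 h1
    have h7 : ‖e‖ * ‖pprod ap (k + 1) s‖
        * ‖(q:ℂ) ^ psum n (k + 1) s‖
        ≤ ‖e‖ * ‖pprod ap (k + 1) s‖ :=
      mul_le_of_le_one_right (mul_nonneg h5 h3) h2
    linarith
  have habsAc : ∀ k : ℕ, 1 ≤ k →
      ‖c * pprod ap (k + 1) s * (q:ℂ) ^ psum n (k + 1) s‖ < 1 :=
    fun k hk => habsA k hk c hc1
  have habsBd : ∀ k : ℕ, 1 ≤ k →
      ‖d * pprod ap (k + 1) s * (q:ℂ) ^ psum n (k + 1) s‖ < 1 :=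
    fun k hk => habsA k hk d hd1
  obtain ⟨hd2, hc2⟩ := tail_lemma q hq0 hq1 a b c d ap s hs0 n hA0 habsAc habsBd hap1
    (s - 1) 2 (le_refl 2) (by omega)
  have hF1 : Ff q a b c d ap s hs0 n 1
      = fac1 (↑q) (c * pprod ap 2 s * (q:ℂ) ^ psum n 2 s)
          (d * pprod ap 2 s * (q:ℂ) ^ psum n 2 s) a b (n 1) (idxf s hs0 1) := by
    rw [Ff, if_pos rfl]
  have hF1deg : (Ff q a b c d ap s hs0 n 1).totalDegree ≤ n 1 := by
    rw [hF1]; exact totalDegree_fac1_le _ _ _ _ _ _ _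
  have hpsum : psum n 1 s = n 1 + ∑ j ∈ Finset.Icc 2 s, n j := by
    rw [_root_.psum]
    have hins : Finset.Icc 1 s = insert 1 (Finset.Icc 2 s) := by
      ext t; simp only [Finset.mem_Icc, Finset.mem_insert]; omega
    rw [hins, Finset.sum_insert (by simp)]
  refine ⟨Ff q a b c d ap s hs0 n 1 * ∏ k ∈ Finset.Icc 2 s, Ff q a b c d ap s hs0 n k, ?_, ?_⟩
  · -- total degree
    have hle : (Ff q a b c d ap s hs0 n 1
        * ∏ k ∈ Finset.Icc 2 s, Ff q a b c d ap s hs0 n k).totalDegree ≤ psum n 1 s := by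
      rw [hpsum]
      exact (totalDegree_mul _ _).trans (add_le_add hF1deg hd2)
    have hcoef : coeff (Finsupp.single (idxf s hs0 1) (n 1) + μtf s hs0 n 2)
        (Ff q a b c d ap s hs0 n 1 * ∏ k ∈ Finset.Icc 2 s, Ff q a b c d ap s hs0 n k) ≠ 0 := by
      rw [coeff_mul_step _ _ (idxf s hs0 1) (n 1) (μtf s hs0 n 2)
        (∑ j ∈ Finset.Icc 2 s, n j) hF1deg hd2 (μtf_sum s hs0 n 2) ?_]
      · refine mul_ne_zero ?_ hc2
        rw [hF1]
        exact fac1_top_ne_zero q hq0 hq1 _ _ a b (hA0 1 (le_refl 1))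
          (habsAc 1 (le_refl 1)) (habsBd 1 (le_refl 1)) ha1 hb1 (n 1) _
      · intro v hv
        rw [hF1] at hv
        left
        simpa using vars_fac1 _ _ _ _ _ _ _ hv
    have hge : psum n 1 s ≤ (Ff q a b c d ap s hs0 n 1
        * ∏ k ∈ Finset.Icc 2 s, Ff q a b c d ap s hs0 n k).totalDegree := by
      have hsupp := mem_support_iff.mpr hcoef
      have hle2 := le_totalDegree hsupp
      rwa [weight_add, weight_single, μtf_sum, ← hpsum] at hle2
    exact le_antisymm hle hge
  · -- evaluation
    intro x hx
    have hf : ∀ k, 1 ≤ k → k ≤ s →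
        (fun i : Fin s => ((x ((i : ℕ) + 1) : ℝ) : ℂ)) (idxf s hs0 k) = ((x k : ℝ) : ℂ) := by
      intro k h1 h2
      show ((x (((idxf s hs0 k) : ℕ) + 1) : ℝ) : ℂ) = _
      rw [idxf_val hs0 h1 h2]
      have h3 : k - 1 + 1 = k := by omega
      rw [h3]
    rw [map_mul, eval_prod, mvAW2]
    congr 1
    · rw [hF1]
      exact (eval_fac1 q (c * pprod ap 2 s * (q:ℂ) ^ psum n 2 s)
        (d * pprod ap 2 s * (q:ℂ) ^ psum n 2 s) a b (n 1) (idxf s hs0 1)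
        (fun i : Fin s => ((x ((i : ℕ) + 1) : ℝ) : ℂ))
        (hx 1 (Finset.mem_Icc.mpr ⟨le_refl 1, hs⟩)) (hf 1 (le_refl 1) hs)).symm
    · refine (Finset.prod_congr rfl fun k hk => ?_)
      obtain ⟨hk2, hks⟩ := Finset.mem_Icc.mp hk
      rw [Ff, if_neg (by omega)]
      have hAα : ‖(c * pprod ap (k + 1) s * (q:ℂ) ^ psum n (k + 1) s) * ap k‖ < 1 :=
        abs_mul_lt_one (habsAc k (by omega)) (hap1 k hk2 hks)
      have hABk : ‖(c * pprod ap (k + 1) s * (q:ℂ) ^ psum n (k + 1) s)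
          * (d * pprod ap (k + 1) s * (q:ℂ) ^ psum n (k + 1) s)‖ < 1 :=
        abs_mul_lt_one (habsAc k (by omega)) (habsBd k (by omega))
      exact (eval_fack q hq0 hq1 (c * pprod ap (k + 1) s * (q:ℂ) ^ psum n (k + 1) s)
        (d * pprod ap (k + 1) s * (q:ℂ) ^ psum n (k + 1) s) (ap k) (hA0 k (by omega))
        hAα hABk (n k) (idxf s hs0 (k - 1)) (idxf s hs0 k)
        (fun i : Fin s => ((x ((i : ℕ) + 1) : ℝ) : ℂ))
        (hx (k - 1) (Finset.mem_Icc.mpr ⟨by omega, by omega⟩))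
        (hx k (Finset.mem_Icc.mpr ⟨by omega, hks⟩))
        (hf (k - 1) (by omega) (by omega)) (hf k (by omega) hks)).symm
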